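/- If f has exactly two zeros in [0, π] and f(0) ≥ 0 and f(π) ≥ 0, then P has exactly two distinct real roots, and both lie in [−u, u]. -/

import Mathlib

open Real


private lemma stmt15_aux_ub (a c1 c2 : ℝ) (h1r : c1 ≤ 1) (h2r : c2 ≤ 1)
    (h1l : -1 ≤ c1) (h2l : -1 ≤ c2) (hsq : 0 < (c1 - c2)^2)
    (hae : a = -8*(c1+c2)*(c1^2+c2^2-1)) : a < 16 := by
  nlinarith [mul_nonneg (mul_nonneg (sub_nonneg.2 h1r) (sub_nonneg.2 h2r)) hsq.le,
    mul_nonneg (mul_nonneg (by linarith : (0:ℝ) ≤ 1 + c1) (by linarith : (0:ℝ) ≤ 1 + c2)) hsq.le,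
    mul_nonneg (sub_nonneg.2 h1r) (sub_nonneg.2 h2r),
    mul_nonneg (by linarith : (0:ℝ) ≤ 1 + c1) (by linarith : (0:ℝ) ≤ 1 + c2),
    sq_nonneg (c1 + c2), sq_nonneg (c1 - c2), sq_nonneg (c1*c2 - 1), sq_nonneg (c1*c2 + 1)]

private lemma stmt15_aux_lb (a c1 c2 : ℝ) (h1r : c1 ≤ 1) (h2r : c2 ≤ 1)
    (h1l : -1 ≤ c1) (h2l : -1 ≤ c2) (hsq : 0 < (c1 - c2)^2)
    (hae : a = -8*(c1+c2)*(c1^2+c2^2-1)) : -16 < a := by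
  nlinarith [mul_nonneg (mul_nonneg (sub_nonneg.2 h1r) (sub_nonneg.2 h2r)) hsq.le,
    mul_nonneg (mul_nonneg (by linarith : (0:ℝ) ≤ 1 + c1) (by linarith : (0:ℝ) ≤ 1 + c2)) hsq.le,
    mul_nonneg (sub_nonneg.2 h1r) (sub_nonneg.2 h2r),
    mul_nonneg (by linarith : (0:ℝ) ≤ 1 + c1) (by linarith : (0:ℝ) ≤ 1 + c2),
    sq_nonneg (c1 + c2), sq_nonneg (c1 - c2), sq_nonneg (c1*c2 - 1), sq_nonneg (c1*c2 + 1)]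

private lemma stmt15_aux_right (a b c : ℝ) (ha1 : -16 < a) (ha2 : a < 16)
    (hb1 : a + b + 1 ≥ 0) (hc : 1 < c) : 0 < 8*c^4 - 8*c^2 + a*c + (b+1) := by
  nlinarith [mul_pos (by linarith : (0:ℝ) < c - 1) (by nlinarith : (0:ℝ) < 8*(c+1)*c^2 + a)]

private lemma stmt15_aux_left (a b c : ℝ) (ha1 : -16 < a) (ha2 : a < 16)
    (hb1 : -a + b + 1 ≥ 0) (hc : c < -1) : 0 < 8*c^4 - 8*c^2 + a*c + (b+1) := by
  nlinarith [mul_pos_of_neg_of_neg (by linarith : c + 1 < 0) (by nlinarith : 8*(c-1)*c^2 + a < 0)]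

theorem stmt_15 (m p q : ℝ) (hm : m < 0)
    (u a b : ℝ) (P f : ℝ → ℝ)
    (hu : u = Real.sqrt (-m))
    (ha : a = 8 * p / (-m) ^ ((3 : ℝ) / 2))
    (hb : b = 8 * q / m ^ 2 - 1)
    (hP : ∀ t, P t = t ^ 4 + m * t ^ 2 + p * t + q)
    (hf : ∀ θ, f θ = a * Real.cos θ + Real.cos (4 * θ) + b)
    (h2 : {θ ∈ Set.Icc 0 π | f θ = 0}.encard = 2)
    (h0 : f 0 ≥ 0) (hπ : f π ≥ 0) :
    {t : ℝ | P t = 0}.encard = 2 ∧ ∀ t : ℝ, P t = 0 → t ∈ Set.Icc (-u) u := by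
  have hmpos : 0 < -m := by linarith
  have hupos : 0 < u := hu ▸ Real.sqrt_pos.mpr hmpos
  have hune : u ≠ 0 := ne_of_gt hupos
  have hu2 : u ^ 2 = -m := by rw [hu, sq_sqrt hmpos.le]
  have hu3 : (-m) ^ ((3 : ℝ) / 2) = u ^ 3 := by
    rw [show (3:ℝ)/2 = 1 + 1/2 by norm_num, Real.rpow_add hmpos, Real.rpow_one,
      ← Real.sqrt_eq_rpow, ← hu, ← hu2]
    ring
  have hu3ne : u ^ 3 ≠ 0 := pow_ne_zero 3 hune
  -- express p and q
  have hpa : p = a * u ^ 3 / 8 := by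
    rw [ha, hu3]; field_simp
  have hqb : q = (b + 1) * u ^ 4 / 8 := by
    have hm2 : m ^ 2 = u ^ 4 := by rw [show u^4 = (u^2)^2 by ring, hu2]; ring
    have hm2ne : m ^ 2 ≠ 0 := pow_ne_zero 2 (ne_of_lt hm)
    rw [hb, ← hm2]; field_simp; rw [sub_add_cancel]; field_simp [ne_of_lt hm]
  set h : ℝ → ℝ := fun c => 8*c^4 - 8*c^2 + a*c + (b+1) with hh
  -- f θ = h (cos θ)
  have hfh : ∀ θ, f θ = h (Real.cos θ) := by
    intro θ
    have c4 : Real.cos (4*θ) = 2 * Real.cos (2*θ)^2 - 1 := by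
      rw [show (4:ℝ)*θ = 2*(2*θ) by ring, Real.cos_two_mul]
    rw [hf, c4, Real.cos_two_mul]; simp only [hh]; ring
  -- P t = (u^4/8) * h (t/u)
  have hPh : ∀ t, P t = (u^4/8) * h (t/u) := by
    intro t
    rw [hP, hpa, hqb, show m = -u^2 by linarith [hu2]]
    simp only [hh]
    field_simp
    ring
  -- f values at endpoints
  have hf0 : a + b + 1 ≥ 0 := by
    have := h0; rw [hf] at this
    simp only [Real.cos_zero, mul_zero, mul_one] at this
    norm_num at this
    linarith
  have hfπ : -a + b + 1 ≥ 0 := by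
    have := hπ; rw [hf] at this
    have c4 : Real.cos (4*π) = 1 := by
      rw [show (4:ℝ)*π = 2*(2*π) by ring, Real.cos_two_mul, Real.cos_two_pi]; norm_num
    rw [c4, Real.cos_pi] at this; linarith
  set S := {θ ∈ Set.Icc 0 π | f θ = 0} with hS
  -- bounds on a from two distinct zeros
  obtain ⟨θ1, θ2, hθne, hSeq⟩ := Set.encard_eq_two.mp h2
  have hθ1 : θ1 ∈ S := by rw [hSeq]; exact Set.mem_insert _ _
  have hθ2 : θ2 ∈ S := by rw [hSeq]; exact Set.mem_insert_of_mem _ rfl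
  set c1 := Real.cos θ1
  set c2 := Real.cos θ2
  have hcne : c1 ≠ c2 := fun hc => hθne (Real.injOn_cos hθ1.1 hθ2.1 hc)
  have hc1b : -1 ≤ c1 ∧ c1 ≤ 1 := ⟨Real.neg_one_le_cos θ1, Real.cos_le_one θ1⟩
  have hc2b : -1 ≤ c2 ∧ c2 ≤ 1 := ⟨Real.neg_one_le_cos θ2, Real.cos_le_one θ2⟩
  have hhc1 : h c1 = 0 := by rw [← hfh]; exact hθ1.2
  have hhc2 : h c2 = 0 := by rw [← hfh]; exact hθ2.2
  have hsubne : c1 - c2 ≠ 0 := sub_ne_zero.mpr hcne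
  have hsq : 0 < (c1 - c2)^2 := by positivity
  have hae : a = -8*(c1+c2)*(c1^2+c2^2-1) := by
    have key : (c1 - c2) * (a + 8*(c1+c2)*(c1^2+c2^2-1)) = 0 := by
      have e1 : h c1 = 0 := hhc1
      have e2 : h c2 = 0 := hhc2
      simp only [hh] at e1 e2
      linear_combination e1 - e2
    rcases mul_eq_zero.mp key with h' | h'
    · exact absurd h' hsubne
    · linarith
  obtain ⟨h1l, h1r⟩ := hc1b
  obtain ⟨h2l, h2r⟩ := hc2b
  have haub : a < 16 := stmt15_aux_ub a c1 c2 h1r h2r h1l h2l hsq hae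
  have halb : -16 < a := stmt15_aux_lb a c1 c2 h1r h2r h1l h2l hsq hae
  -- all zeros of h are in [-1,1]
  have hbound : ∀ c : ℝ, h c = 0 → -1 ≤ c ∧ c ≤ 1 := by
    intro c hc
    by_contra hcon
    push_neg at hcon
    have : 0 < h c := by
      simp only [hh]
      rcases lt_or_ge 1 c with hc1 | hc1
      · exact stmt15_aux_right a b c halb haub hf0 hc1
      · have hclt : c < -1 := by
          rcases lt_or_ge c (-1) with h' | h'
          · exact h'
          · exact absurd (hcon h') (not_lt.mpr hc1)
        exact stmt15_aux_left a b c halb haub hfπ hclt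
    linarith [this, hc.le, hc.ge]
  -- zero set of h equals cos '' S
  have hZ : {c : ℝ | h c = 0} = Real.cos '' S := by
    ext c
    constructor
    · intro hc
      obtain ⟨hcl, hcr⟩ := hbound c hc
      refine ⟨Real.arccos c, ⟨⟨Real.arccos_nonneg c, Real.arccos_le_pi c⟩, ?_⟩,
        Real.cos_arccos hcl hcr⟩
      rw [hfh, Real.cos_arccos hcl hcr]; exact hc
    · rintro ⟨θ, hθ, rfl⟩
      simp only [Set.mem_setOf_eq, ← hfh]
      exact hθ.2
  have hZcard : {c : ℝ | h c = 0}.encard = 2 := by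
    rw [hZ, Set.InjOn.encard_image (Real.injOn_cos.mono (Set.sep_subset _ _))]
    exact h2
  have hu4pos : (0:ℝ) < u^4/8 := by positivity
  have hPiff : ∀ t : ℝ, P t = 0 ↔ h (t/u) = 0 := by
    intro t
    rw [hPh]
    constructor
    · intro ht
      rcases mul_eq_zero.mp ht with h' | h'
      · exact absurd h' (ne_of_gt hu4pos)
      · exact h'
    · intro ht; rw [ht]; ring
  constructor
  · have himg : {t : ℝ | P t = 0} = (fun c => u * c) '' {c : ℝ | h c = 0} := by
      ext t
      constructor
      · intro ht
        exact ⟨t/u, (hPiff t).mp ht, by field_simp⟩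
      · rintro ⟨c, hc, rfl⟩
        refine (hPiff _).mpr ?_
        rw [show u * c / u = c by field_simp]
        exact hc
    rw [himg, Set.InjOn.encard_image ((mul_right_injective₀ hune).injOn)]
    exact hZcard
  · intro t ht
    obtain ⟨hl, hr⟩ := hbound _ ((hPiff t).mp ht)
    have hr' : t ≤ u := by
      rw [div_le_one hupos] at hr; exact hr
    have hl' : -1 * u ≤ t := (le_div_iff₀ hupos).mp hl
    exact ⟨by linarith, hr'⟩
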